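/- Let G be a finite simple graph, k ≥ 1, and let S be an independent set of vertices of G, each having at least one neighbor in G, with |S| > k. Let G' be obtained from G by adding, for each i ∈ [k], a root vertex r_i and pendant vertices {m^i_s : s ∈ S} with edges r_i–m^i_s and m^i_s–s for all s ∈ S, and, for each pair i < j in [k], a perfect matching between the pendant sets {m^i_s : s ∈ S} and {m^j_s : s ∈ S} (each pendant of gadget i is adjacent to exactly one pendant of gadget j); no other edges are added. Let H be the subgraph of G' induced on S together with all roots and pendants. If H contains no triangle and no cycle of length 4, then for every vertex u of H there do not exist k vertices v₁, …, v_k ∈ V(G') ∖ {u} with N_{G'}(u) ⊆ N_{G'}(v₁) ∪ … ∪ N_{G'}(v_k). -/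
import Mathlib


/-- The graph `G'` obtained from `G` by attaching `k` matching gadgets to the set `S`
(for each `i ∈ [k]` a root `r_i` and pendants `m^i_s` for `s ∈ S`, with edges `r_i–m^i_s`
and `m^i_s–s`), and matching the gadgets to one another: for `i < j`, pendant `m^i_s`
is adjacent exactly to the pendant `m^j_{σ i j s}`, where `σ i j` is a bijection of the
pendant index set. No other edges are added. -/
def multiMatchGraph {V : Type*} (G : SimpleGraph V) (k : ℕ) (S : Finset V)
    (σ : Fin k → Fin k → ({x // x ∈ S} ≃ {x // x ∈ S})) :
    SimpleGraph (V ⊕ Fin k ⊕ (Fin k × {x // x ∈ S})) :=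
  SimpleGraph.fromRel (fun x y =>
    match x, y with
    | Sum.inl v, Sum.inl w => G.Adj v w
    | Sum.inr (Sum.inl i), Sum.inr (Sum.inr (i', _)) => i = i'
    | Sum.inr (Sum.inr (_, s)), Sum.inl v => v = s.val
    | Sum.inr (Sum.inr (i, s)), Sum.inr (Sum.inr (j, t)) => i < j ∧ t = σ i j s
    | _, _ => False)

/-- The vertex set of the subgraph `H`: `S` together with all roots and pendants. -/
def gadgetSet {V : Type*} (k : ℕ) (S : Finset V) :
    Set (V ⊕ Fin k ⊕ (Fin k × {x // x ∈ S})) :=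
  {x | match x with | Sum.inl v => v ∈ S | _ => True}

section Aux

variable {V : Type*} {G : SimpleGraph V} {k : ℕ} {S : Finset V}
  {σ : Fin k → Fin k → ({x // x ∈ S} ≃ {x // x ∈ S})}

lemma mmg_adj_ll {a b : V} :
    (multiMatchGraph G k S σ).Adj (Sum.inl a) (Sum.inl b) ↔ G.Adj a b := by
  simp only [multiMatchGraph, SimpleGraph.fromRel_adj]
  constructor
  · rintro ⟨h, h1 | h1⟩
    · exact h1
    · exact h1.symm
  · intro h
    exact ⟨by simp [h.ne], Or.inl h⟩

lemma mmg_adj_rl {i : Fin k} {a : V} :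
    ¬ (multiMatchGraph G k S σ).Adj (Sum.inr (Sum.inl i)) (Sum.inl a) := by
  simp [multiMatchGraph, SimpleGraph.fromRel_adj]

lemma mmg_adj_rr {i j : Fin k} :
    ¬ (multiMatchGraph G k S σ).Adj (Sum.inr (Sum.inl i)) (Sum.inr (Sum.inl j)) := by
  simp [multiMatchGraph, SimpleGraph.fromRel_adj]

lemma mmg_adj_rp {i j : Fin k} {s : {x // x ∈ S}} :
    (multiMatchGraph G k S σ).Adj (Sum.inr (Sum.inl i)) (Sum.inr (Sum.inr (j, s))) ↔ i = j := by
  simp [multiMatchGraph, SimpleGraph.fromRel_adj]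

lemma mmg_adj_pl {i : Fin k} {s : {x // x ∈ S}} {a : V} :
    (multiMatchGraph G k S σ).Adj (Sum.inr (Sum.inr (i, s))) (Sum.inl a) ↔ a = s.val := by
  simp [multiMatchGraph, SimpleGraph.fromRel_adj]

lemma mmg_adj_pp {i j : Fin k} {s t : {x // x ∈ S}} :
    (multiMatchGraph G k S σ).Adj (Sum.inr (Sum.inr (i, s))) (Sum.inr (Sum.inr (j, t))) ↔
      (i < j ∧ t = σ i j s) ∨ (j < i ∧ s = σ j i t) := by
  simp only [multiMatchGraph, SimpleGraph.fromRel_adj]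
  constructor
  · rintro ⟨h, h1 | h1⟩
    · exact Or.inl h1
    · exact Or.inr h1
  · rintro (⟨h, h1⟩ | ⟨h, h1⟩)
    · exact ⟨by simp; exact fun h' _ => h.ne h', Or.inl ⟨h, h1⟩⟩
    · exact ⟨by simp; exact fun h' _ => h.ne' h', Or.inr ⟨h, h1⟩⟩

lemma mem_gadget_inr {y : Fin k ⊕ (Fin k × {x // x ∈ S})} :
    (Sum.inr y : V ⊕ Fin k ⊕ (Fin k × {x // x ∈ S})) ∈ gadgetSet k S := by
  cases y <;> trivial

lemma mem_gadget_inl {a : V} (ha : a ∈ S) :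
    (Sum.inl a : V ⊕ Fin k ⊕ (Fin k × {x // x ∈ S})) ∈ gadgetSet k S := ha

/-- Any vertex adjacent to a pendant lies in the gadget set. -/
lemma mem_gadget_of_adj_pend {x : V ⊕ Fin k ⊕ (Fin k × {x // x ∈ S})} {j : Fin k}
    {t : {x // x ∈ S}} (h : (multiMatchGraph G k S σ).Adj x (Sum.inr (Sum.inr (j, t)))) :
    x ∈ gadgetSet k S := by
  rcases x with b | y
  · exact mem_gadget_inl (by rw [mmg_adj_pl.mp h.symm]; exact t.2)
  · exact mem_gadget_inr

/-- Any vertex adjacent to a root lies in the gadget set. -/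
lemma mem_gadget_of_adj_root {x : V ⊕ Fin k ⊕ (Fin k × {x // x ∈ S})} {i : Fin k}
    (h : (multiMatchGraph G k S σ).Adj x (Sum.inr (Sum.inl i))) :
    x ∈ gadgetSet k S := by
  rcases x with b | y
  · exact absurd h.symm mmg_adj_rl
  · exact mem_gadget_inr

/-- No four-cycles in `H` means: no vertex `x ≠ u` of `H` is adjacent to two distinct
common neighbours of `u` in `H`. -/
lemma no_two_common
    (hH4 : ¬ ∃ a b c d : (gadgetSet k S : Set _),
      a ≠ b ∧ a ≠ c ∧ a ≠ d ∧ b ≠ c ∧ b ≠ d ∧ c ≠ d ∧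
      ((multiMatchGraph G k S σ).induce (gadgetSet k S)).Adj a b ∧
      ((multiMatchGraph G k S σ).induce (gadgetSet k S)).Adj b c ∧
      ((multiMatchGraph G k S σ).induce (gadgetSet k S)).Adj c d ∧
      ((multiMatchGraph G k S σ).induce (gadgetSet k S)).Adj d a)
    {u z₁ z₂ x : V ⊕ Fin k ⊕ (Fin k × {x // x ∈ S})}
    (hu : u ∈ gadgetSet k S) (hz₁ : z₁ ∈ gadgetSet k S) (hz₂ : z₂ ∈ gadgetSet k S)
    (hx : x ∈ gadgetSet k S) (hxu : x ≠ u) (hzz : z₁ ≠ z₂)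
    (h1 : (multiMatchGraph G k S σ).Adj u z₁) (h2 : (multiMatchGraph G k S σ).Adj u z₂)
    (h3 : (multiMatchGraph G k S σ).Adj x z₁) (h4 : (multiMatchGraph G k S σ).Adj x z₂) :
    False := by
  apply hH4
  refine ⟨⟨x, hx⟩, ⟨z₁, hz₁⟩, ⟨u, hu⟩, ⟨z₂, hz₂⟩, ?_, ?_, ?_, ?_, ?_, ?_, ?_, ?_, ?_, ?_⟩
  · exact fun h => h3.ne (congrArg Subtype.val h)
  · exact fun h => hxu (congrArg Subtype.val h)
  · exact fun h => h4.ne (congrArg Subtype.val h)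
  · exact fun h => h1.ne' (congrArg Subtype.val h)
  · exact fun h => hzz (congrArg Subtype.val h)
  · exact fun h => h2.ne (congrArg Subtype.val h)
  · exact SimpleGraph.comap_adj.mpr h3
  · exact SimpleGraph.comap_adj.mpr h1.symm
  · exact SimpleGraph.comap_adj.mpr h2
  · exact SimpleGraph.comap_adj.mpr h4.symm

/-- Pigeonhole: if `k` vertices cover more than `k` targets, with each vertex covering at most
one target, contradiction. -/
lemma pigeon {W : Type*} {k : ℕ} (T : Finset W) (hT : k < T.card)
    (v : Fin k → W) (P : W → W → Prop)
    (hcov : ∀ z ∈ T, ∃ i, P (v i) z)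
    (huniq : ∀ i, ∀ z₁ ∈ T, ∀ z₂ ∈ T, P (v i) z₁ → P (v i) z₂ → z₁ = z₂) : False := by
  classical
  choose f hf using fun z : {z // z ∈ T} => hcov z.1 z.2
  obtain ⟨a, b, hab, hfe⟩ := Fintype.exists_ne_map_eq_of_card_lt f (by simpa using hT)
  exact hab (Subtype.ext (huniq (f a) a.1 a.2 b.1 b.2 (hf a) (hfe ▸ hf b)))

end Aux

/-- If `S` is an independent set of more than `k` vertices of `G`, each with a neighbor,
`G'` is obtained by attaching `k` pairwise-matched matching gadgets to `S`, and the
subgraph `H` of `G'` induced on `S` together with all roots and pendants has no triangle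
and no 4-cycle, then for every vertex `u` of `H` there are no `k` vertices
`v₁, …, v_k ≠ u` with `N_{G'}(u) ⊆ N_{G'}(v₁) ∪ … ∪ N_{G'}(v_k)`. -/
theorem stmt13 {V : Type*} [Fintype V] (G : SimpleGraph V) (k : ℕ) (hk : 1 ≤ k)
    (S : Finset V) (hcard : k < S.card)
    (hind : ∀ a ∈ S, ∀ b ∈ S, ¬ G.Adj a b)
    (hnbr : ∀ a ∈ S, ∃ v : V, G.Adj a v)
    (σ : Fin k → Fin k → ({x // x ∈ S} ≃ {x // x ∈ S}))
    (hH3 : ((multiMatchGraph G k S σ).induce (gadgetSet k S)).CliqueFree 3)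
    (hH4 : ¬ ∃ a b c d : (gadgetSet k S : Set _),
      a ≠ b ∧ a ≠ c ∧ a ≠ d ∧ b ≠ c ∧ b ≠ d ∧ c ≠ d ∧
      ((multiMatchGraph G k S σ).induce (gadgetSet k S)).Adj a b ∧
      ((multiMatchGraph G k S σ).induce (gadgetSet k S)).Adj b c ∧
      ((multiMatchGraph G k S σ).induce (gadgetSet k S)).Adj c d ∧
      ((multiMatchGraph G k S σ).induce (gadgetSet k S)).Adj d a) :
    ∀ u ∈ gadgetSet k S,
      ¬ ∃ v : Fin k → (V ⊕ Fin k ⊕ (Fin k × {x // x ∈ S})),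
        (∀ i, v i ≠ u) ∧
        ∀ z, (multiMatchGraph G k S σ).Adj u z →
          ∃ i, (multiMatchGraph G k S σ).Adj (v i) z := by
  classical
  intro u hu
  rintro ⟨v, hvne, hcov⟩
  rcases u with a | (i | ⟨i, s⟩)
  · -- u = Sum.inl a with a ∈ S
    have ha : a ∈ S := hu
    obtain ⟨w, hw⟩ := hnbr a ha
    have hwS : w ∉ S := fun h => hind a ha w h hw
    set pend : Fin k → (V ⊕ Fin k ⊕ (Fin k × {x // x ∈ S})) :=
      fun j => Sum.inr (Sum.inr (j, ⟨a, ha⟩)) with hpend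
    have hinj : Function.Injective pend := by
      intro x y h; simpa [hpend] using h
    set T : Finset (V ⊕ Fin k ⊕ (Fin k × {x // x ∈ S})) :=
      insert (Sum.inl w) (Finset.univ.image pend) with hT
    have hTcard : k < T.card := by
      rw [hT, Finset.card_insert_of_notMem (by simp [hpend]),
        Finset.card_image_of_injective _ hinj]
      simp
    have hadj : ∀ z ∈ T, (multiMatchGraph G k S σ).Adj (Sum.inl a) z := by
      intro z hz
      rw [hT, Finset.mem_insert] at hz
      rcases hz with rfl | hz
      · exact mmg_adj_ll.mpr hw
      · obtain ⟨j, -, rfl⟩ := Finset.mem_image.mp hz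
        simp only [hpend]
        exact ((mmg_adj_pl (s := ⟨a, ha⟩)).mpr rfl).symm
    refine pigeon T hTcard v (fun x z => (multiMatchGraph G k S σ).Adj x z)
      (fun z hz => hcov z (hadj z hz)) ?_
    intro i0 z₁ hz₁ z₂ hz₂ hxz₁ hxz₂
    by_contra hne
    rw [hT, Finset.mem_insert] at hz₁ hz₂
    -- helper: v i0 cannot be adjacent to both Sum.inl w and a pendant over a
    have hkey : ∀ j : Fin k, (multiMatchGraph G k S σ).Adj (v i0) (Sum.inl w) →
        (multiMatchGraph G k S σ).Adj (v i0) (pend j) → False := by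
      intro j h1 h2
      simp only [hpend] at h2
      rcases hx : v i0 with b | (l | ⟨l, t⟩)
      · rw [hx] at h2
        have : b = a := mmg_adj_pl.mp h2.symm
        exact hvne i0 (by rw [hx, this])
      · rw [hx] at h1; exact mmg_adj_rl h1
      · rw [hx] at h1
        exact hwS (by rw [mmg_adj_pl.mp h1]; exact t.2)
    rcases hz₁ with rfl | hz₁ <;> rcases hz₂ with rfl | hz₂
    · exact hne rfl
    · obtain ⟨j, -, rfl⟩ := Finset.mem_image.mp hz₂
      exact hkey j hxz₁ hxz₂
    · obtain ⟨j, -, rfl⟩ := Finset.mem_image.mp hz₁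
      exact hkey j hxz₂ hxz₁
    · obtain ⟨j₁, -, rfl⟩ := Finset.mem_image.mp hz₁
      obtain ⟨j₂, -, rfl⟩ := Finset.mem_image.mp hz₂
      simp only [hpend] at hxz₁ hxz₂ hne
      exact no_two_common hH4 (mem_gadget_inl ha) mem_gadget_inr mem_gadget_inr
        (mem_gadget_of_adj_pend hxz₁) (hvne i0) hne
        (((mmg_adj_pl (s := ⟨a, ha⟩)).mpr rfl).symm) (((mmg_adj_pl (s := ⟨a, ha⟩)).mpr rfl).symm) hxz₁ hxz₂
  · -- u = root i
    have hle : k + 1 ≤ Fintype.card {x // x ∈ S} := by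
      simpa [Fintype.card_coe] using hcard
    obtain ⟨f⟩ : Nonempty (Fin (k+1) ↪ {x // x ∈ S}) := by
      rw [Function.Embedding.nonempty_iff_card_le]; simpa using hle
    set pend : Fin (k+1) → (V ⊕ Fin k ⊕ (Fin k × {x // x ∈ S})) :=
      fun n => Sum.inr (Sum.inr (i, f n)) with hpend
    have hinj : Function.Injective pend := by
      intro x y h
      exact f.injective (by simpa [hpend] using h)
    set T : Finset (V ⊕ Fin k ⊕ (Fin k × {x // x ∈ S})) :=
      Finset.univ.image pend with hT
    have hTcard : k < T.card := by
      rw [hT, Finset.card_image_of_injective _ hinj]; simp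
    have hadj : ∀ z ∈ T, (multiMatchGraph G k S σ).Adj (Sum.inr (Sum.inl i)) z := by
      intro z hz
      obtain ⟨n, -, rfl⟩ := Finset.mem_image.mp hz
      simp only [hpend]
      exact mmg_adj_rp.mpr rfl
    refine pigeon T hTcard v (fun x z => (multiMatchGraph G k S σ).Adj x z)
      (fun z hz => hcov z (hadj z hz)) ?_
    intro i0 z₁ hz₁ z₂ hz₂ hxz₁ hxz₂
    by_contra hne
    obtain ⟨n₁, -, rfl⟩ := Finset.mem_image.mp hz₁
    obtain ⟨n₂, -, rfl⟩ := Finset.mem_image.mp hz₂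
    simp only [hpend] at hxz₁ hxz₂ hne
    exact no_two_common hH4 mem_gadget_inr mem_gadget_inr mem_gadget_inr
      (mem_gadget_of_adj_pend hxz₁) (hvne i0) hne
      (mmg_adj_rp.mpr rfl) (mmg_adj_rp.mpr rfl) hxz₁ hxz₂
  · -- u = pendant (i, s)
    set u : V ⊕ Fin k ⊕ (Fin k × {x // x ∈ S}) := Sum.inr (Sum.inr (i, s)) with hu'
    set pm : Fin k → (V ⊕ Fin k ⊕ (Fin k × {x // x ∈ S})) :=
      fun j => if h : i < j then Sum.inr (Sum.inr (j, σ i j s))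
        else Sum.inr (Sum.inr (j, (σ j i).symm s)) with hpm
    have hpm_fst : ∀ j, ∃ t : {x // x ∈ S}, pm j = Sum.inr (Sum.inr (j, t)) := by
      intro j
      by_cases h : i < j
      · exact ⟨σ i j s, by simp [hpm, h]⟩
      · exact ⟨(σ j i).symm s, by simp [hpm, h]⟩
    have hpm_inj : Function.Injective pm := by
      intro x y h
      obtain ⟨t₁, h₁⟩ := hpm_fst x
      obtain ⟨t₂, h₂⟩ := hpm_fst y
      rw [h₁, h₂] at h
      exact (Prod.ext_iff.mp (Sum.inr.inj (Sum.inr.inj h))).1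
    have hpm_adj : ∀ j ≠ i, (multiMatchGraph G k S σ).Adj u (pm j) := by
      intro j hj
      rcases lt_or_gt_of_ne (Ne.symm hj) with h | h
      · rw [hpm]; simp only [h, dif_pos]
        exact mmg_adj_pp.mpr (Or.inl ⟨h, rfl⟩)
      · rw [hpm]; simp only [not_lt_of_gt h, dif_neg, not_false_iff]
        exact mmg_adj_pp.mpr (Or.inr ⟨h, by simp⟩)
    set T : Finset (V ⊕ Fin k ⊕ (Fin k × {x // x ∈ S})) :=
      insert (Sum.inr (Sum.inl i)) (insert (Sum.inl s.val)
        ((Finset.univ.erase i).image pm)) with hT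
    have h1 : (Sum.inl s.val : V ⊕ Fin k ⊕ (Fin k × {x // x ∈ S})) ∉
        (Finset.univ.erase i).image pm := by
      intro hmem
      obtain ⟨j, -, hj⟩ := Finset.mem_image.mp hmem
      obtain ⟨t, ht⟩ := hpm_fst j
      rw [ht] at hj
      simp at hj
    have h2 : (Sum.inr (Sum.inl i) : V ⊕ Fin k ⊕ (Fin k × {x // x ∈ S})) ∉
        insert (Sum.inl s.val) ((Finset.univ.erase i).image pm) := by
      intro hmem
      rcases Finset.mem_insert.mp hmem with h | h
      · simp at h
      · obtain ⟨j, -, hj⟩ := Finset.mem_image.mp h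
        obtain ⟨t, ht⟩ := hpm_fst j
        rw [ht] at hj
        simp at hj
    have hTcard : k < T.card := by
      rw [hT, Finset.card_insert_of_notMem h2, Finset.card_insert_of_notMem h1,
        Finset.card_image_of_injective _ hpm_inj,
        Finset.card_erase_of_mem (Finset.mem_univ i)]
      simp only [Finset.card_univ, Fintype.card_fin]
      omega
    have hadj : ∀ z ∈ T, (multiMatchGraph G k S σ).Adj u z := by
      intro z hz
      rw [hT, Finset.mem_insert, Finset.mem_insert] at hz
      rcases hz with rfl | rfl | hz
      · exact (mmg_adj_rp.mpr rfl).symm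
      · exact mmg_adj_pl.mpr rfl
      · obtain ⟨j, hj, rfl⟩ := Finset.mem_image.mp hz
        exact hpm_adj j (Finset.mem_erase.mp hj).1
    refine pigeon T hTcard v (fun x z => (multiMatchGraph G k S σ).Adj x z)
      (fun z hz => hcov z (hadj z hz)) ?_
    intro i0 z₁ hz₁ z₂ hz₂ hxz₁ hxz₂
    by_contra hne
    -- v i0 is in the gadget set
    have hmem : ∀ z ∈ T, (multiMatchGraph G k S σ).Adj (v i0) z → v i0 ∈ gadgetSet k S ∨
        (∃ b : V, v i0 = Sum.inl b ∧ b ∉ S) := by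
      intro z hz hadj'
      rcases hvx : v i0 with b | y
      · by_cases hb : b ∈ S
        · exact Or.inl (mem_gadget_inl hb)
        · exact Or.inr ⟨b, rfl, hb⟩
      · exact Or.inl mem_gadget_inr
    have hzmem : ∀ z ∈ T, z ∈ gadgetSet k S := by
      intro z hz
      rw [hT, Finset.mem_insert, Finset.mem_insert] at hz
      rcases hz with rfl | rfl | hz
      · exact mem_gadget_inr
      · exact mem_gadget_inl s.2
      · obtain ⟨j, -, rfl⟩ := Finset.mem_image.mp hz
        obtain ⟨t, ht⟩ := hpm_fst j
        rw [ht]; exact mem_gadget_inr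
    rcases hmem z₁ hz₁ hxz₁ with hvg | ⟨b, hvb, hbS⟩
    · exact no_two_common hH4 mem_gadget_inr (hzmem z₁ hz₁) (hzmem z₂ hz₂) hvg
        (hvne i0) hne (hadj z₁ hz₁) (hadj z₂ hz₂) hxz₁ hxz₂
    · -- v i0 = Sum.inl b with b ∉ S; it is adjacent to z₁ and z₂, both targets
      rw [hvb] at hxz₁ hxz₂
      -- a vertex Sum.inl b with b ∉ S can only be adjacent to a target of the form Sum.inl s.val
      have hforce : ∀ z ∈ T, (multiMatchGraph G k S σ).Adj (Sum.inl b) z →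
          z = Sum.inl s.val := by
        intro z hz hadj'
        rw [hT, Finset.mem_insert, Finset.mem_insert] at hz
        rcases hz with rfl | rfl | hz
        · exact absurd hadj'.symm mmg_adj_rl
        · rfl
        · obtain ⟨j, -, rfl⟩ := Finset.mem_image.mp hz
          obtain ⟨t, ht⟩ := hpm_fst j
          rw [ht] at hadj'
          exact absurd (by rw [mmg_adj_pl.mp hadj'.symm]; exact t.2) hbS
      exact hne ((hforce z₁ hz₁ hxz₁).trans (hforce z₂ hz₂ hxz₂).symm)
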